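/- The nontangential maximal function of ∇b is not square-integrable on the Dirichlet ray near the vertex: with (∇b)*(P) = sup{ ‖∇b(X)‖ : X ∈ Γ(P) } for boundary points P of S_α, one has ∫₀¹ ((∇b)*(t, 0))² dt = +∞. -/

import Mathlib

open MeasureTheory

/-- The open plane sector of aperture `α`. -/
def openSector (α : ℝ) : Set (ℝ × ℝ) :=
  {p : ℝ × ℝ | ∃ r θ : ℝ, 0 < r ∧ 0 < θ ∧ θ < α ∧
    p = (r * Real.cos θ, r * Real.sin θ)}

/-- Nontangential approach region (aperture parameter `a = 1`) at a boundary
point `P` of the sector: `Γ(P) = {X ∈ S_α : |X − P| < 2 dist(X, ∂S_α)}`. -/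
noncomputable def ntRegion (α : ℝ) (P : ℝ × ℝ) : Set (ℝ × ℝ) :=
  {X ∈ openSector α | dist X P < 2 * Metric.infDist X (frontier (openSector α))}

/-- The Euclidean norm of the gradient of `b : ℝ × ℝ → ℝ` at a point. -/
noncomputable def gradNorm (b : ℝ × ℝ → ℝ) (p : ℝ × ℝ) : ℝ :=
  Real.sqrt ((fderiv ℝ b p ((1 : ℝ), (0 : ℝ))) ^ 2 +
    (fderiv ℝ b p ((0 : ℝ), (1 : ℝ))) ^ 2)

/-- The nontangential maximal function of `‖∇b‖` (valued in `ℝ≥0∞`):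
`(∇b)*(P) = sup {‖∇b(X)‖ : X ∈ Γ(P)}`. -/
noncomputable def ntMaxGrad (α : ℝ) (b : ℝ × ℝ → ℝ) (P : ℝ × ℝ) : ENNReal :=
  ⨆ X ∈ ntRegion α P, ENNReal.ofReal (gradNorm b X)

/-! ### Auxiliary lemmas -/

/-- Polar decomposition of a point in the open upper half-plane. -/
lemma BrownAux.polar_upper {p : ℝ × ℝ} (hp : 0 < p.2) :
    0 < ‖(p.1:ℂ) + (p.2:ℂ) * Complex.I‖ ∧
    0 < Complex.arg ((p.1:ℂ) + (p.2:ℂ) * Complex.I) ∧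
    Complex.arg ((p.1:ℂ) + (p.2:ℂ) * Complex.I) < Real.pi ∧
    p = (‖(p.1:ℂ) + (p.2:ℂ) * Complex.I‖ *
          Real.cos (Complex.arg ((p.1:ℂ) + (p.2:ℂ) * Complex.I)),
        ‖(p.1:ℂ) + (p.2:ℂ) * Complex.I‖ *
          Real.sin (Complex.arg ((p.1:ℂ) + (p.2:ℂ) * Complex.I))) := by
  set z : ℂ := (p.1:ℂ) + (p.2:ℂ) * Complex.I with hzdef
  have him : z.im = p.2 := by simp [hzdef]
  have hre : z.re = p.1 := by simp [hzdef]
  have hz : z ≠ 0 := by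
    intro h; rw [h] at him; simp at him; rw [← him] at hp; exact lt_irrefl 0 hp
  refine ⟨norm_pos_iff.mpr hz, ?_, ?_, ?_⟩
  · rcases lt_or_eq_of_le (Complex.arg_nonneg_iff.2 (him ▸ hp.le)) with h | h
    · exact h
    · exfalso
      have := (Complex.arg_eq_zero_iff.1 h.symm).2
      rw [him] at this; exact hp.ne' this
  · exact Complex.arg_lt_pi_iff.2 (Or.inr (by rw [him]; exact hp.ne'))
  · have h1 := Complex.norm_mul_cos_arg z
    have h2 := Complex.norm_mul_sin_arg z
    rw [hre] at h1; rw [him] at h2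
    exact Prod.ext h1.symm h2.symm

/-- For `α ≥ π` the sector contains the open upper half-plane. -/
lemma BrownAux.upper_mem_sector {α : ℝ} (hα : Real.pi ≤ α) {p : ℝ × ℝ}
    (hp : 0 < p.2) : p ∈ openSector α := by
  obtain ⟨h1, h2, h3, h4⟩ := BrownAux.polar_upper hp
  exact ⟨_, _, h1, h2, lt_of_lt_of_le h3 hα, h4⟩

lemma BrownAux.zero_not_mem_sector {α : ℝ} : ((0:ℝ), (0:ℝ)) ∉ openSector α := by
  rintro ⟨r, θ, hr, -, -, hp⟩
  have h1 : r * Real.cos θ = 0 := (Prod.ext_iff.1 hp).1.symm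
  have h2 : r * Real.sin θ = 0 := (Prod.ext_iff.1 hp).2.symm
  have hc : Real.cos θ = 0 := by
    rcases mul_eq_zero.1 h1 with h | h
    · exact absurd h hr.ne'
    · exact h
  have hs : Real.sin θ = 0 := by
    rcases mul_eq_zero.1 h2 with h | h
    · exact absurd h hr.ne'
    · exact h
  have := Real.sin_sq_add_cos_sq θ
  rw [hc, hs] at this; norm_num at this

lemma BrownAux.zero_mem_frontier {α : ℝ} (hα : Real.pi ≤ α) :
    ((0:ℝ), (0:ℝ)) ∈ frontier (openSector α) := by
  rw [frontier]
  refine ⟨?_, fun h => BrownAux.zero_not_mem_sector (interior_subset h)⟩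
  apply mem_closure_iff_seq_limit.2
  refine ⟨fun n => ((0:ℝ), 1/(n+1)),
    fun n => BrownAux.upper_mem_sector hα (by positivity), ?_⟩
  apply Filter.Tendsto.prodMk_nhds tendsto_const_nhds
  exact tendsto_one_div_add_atTop_nhds_zero_nat

lemma BrownAux.frontier_sub {α : ℝ} (hα : Real.pi ≤ α) :
    frontier (openSector α) ⊆ {p : ℝ × ℝ | p.2 ≤ 0} := by
  intro p hp
  by_contra h
  simp only [Set.mem_setOf_eq] at h
  push_neg at h
  have hopen : IsOpen {q : ℝ × ℝ | 0 < q.2} := isOpen_lt continuous_const continuous_snd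
  have : p ∈ interior (openSector α) :=
    interior_maximal (fun q hq => BrownAux.upper_mem_sector hα hq) hopen h
  exact hp.2 this

lemma BrownAux.dist_lower {p q : ℝ × ℝ} (hp : 0 ≤ p.2) (hq : q.2 ≤ 0) :
    p.2 ≤ dist p q := by
  calc p.2 ≤ |p.2 - q.2| := le_trans (by linarith) (le_abs_self _)
  _ = dist p.2 q.2 := (Real.dist_eq _ _).symm
  _ ≤ dist p q := by rw [Prod.dist_eq]; exact le_max_right _ _

lemma BrownAux.infDist_ge {α : ℝ} (hα : Real.pi ≤ α) {p : ℝ × ℝ} (hp : 0 ≤ p.2) :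
    p.2 ≤ Metric.infDist p (frontier (openSector α)) := by
  have h1 : ENNReal.ofReal p.2 ≤ Metric.infEDist p (frontier (openSector α)) := by
    rw [Metric.le_infEDist]
    intro q hq
    rw [edist_dist]
    exact ENNReal.ofReal_le_ofReal
      (BrownAux.dist_lower hp (BrownAux.frontier_sub hα hq))
  have h2 := ENNReal.toReal_mono
    (Metric.infEdist_ne_top ⟨_, BrownAux.zero_mem_frontier hα⟩) h1
  rwa [ENNReal.toReal_ofReal hp] at h2

/-- The reference function `Im ((x + iy)^β)`. -/
noncomputable def BrownAux.gfun (β : ℝ) (p : ℝ × ℝ) : ℝ :=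
  (((p.1 : ℂ) + (p.2 : ℂ) * Complex.I) ^ (β : ℂ)).im

lemma BrownAux.gfun_eq {β : ℝ} {p : ℝ × ℝ} (hp : 0 < p.2) :
    BrownAux.gfun β p = ‖(p.1:ℂ) + (p.2:ℂ)*Complex.I‖ ^ β *
      Real.sin (β * Complex.arg ((p.1:ℂ) + (p.2:ℂ)*Complex.I)) := by
  set z : ℂ := (p.1:ℂ) + (p.2:ℂ)*Complex.I with hzdef
  have him : z.im = p.2 := by simp [hzdef]
  have hz : z ≠ 0 := by
    intro h; rw [h] at him; simp at him; rw [← him] at hp; exact lt_irrefl 0 hp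
  have habs : 0 < ‖z‖ := norm_pos_iff.mpr hz
  rw [BrownAux.gfun, ← hzdef, Complex.cpow_def_of_ne_zero hz]
  rw [Complex.exp_im]
  have h1 : (Complex.log z * (β:ℂ)).re = Real.log ‖z‖ * β := by
    simp [Complex.mul_re, Complex.log_re]
  have h2 : (Complex.log z * (β:ℂ)).im = Complex.arg z * β := by
    simp [Complex.mul_im, Complex.log_im]
  rw [h1, h2, Real.rpow_def_of_pos habs, mul_comm (Complex.arg z) β]

/-- `b` agrees with `gfun β` on the open upper half-plane. -/
lemma BrownAux.b_eq_gfun {α β δ : ℝ} (hα₁ : Real.pi ≤ α) (hδ : 0 < δ)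
    {b : ℝ × ℝ → ℝ}
    (hb : ∀ r θ : ℝ, 0 < r → -δ < θ → θ < α + δ →
      b (r * Real.cos θ, r * Real.sin θ) = r ^ β * Real.sin (β * θ))
    {p : ℝ × ℝ} (hp : 0 < p.2) : b p = BrownAux.gfun β p := by
  obtain ⟨h1, h2, h3, h4⟩ := BrownAux.polar_upper hp
  have := hb _ _ h1 (by linarith) (by linarith)
  rw [← h4] at this
  rw [this, BrownAux.gfun_eq hp]

/-- Value of the gradient norm of `b` on the positive imaginary axis. -/
lemma BrownAux.gradNorm_gfun {β t : ℝ} (hβ : 0 < β) (ht : 0 < t) {b : ℝ × ℝ → ℝ}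
    (hbg : ∀ p : ℝ × ℝ, 0 < p.2 → b p = BrownAux.gfun β p) :
    gradNorm b ((0:ℝ), t) = β * t ^ (β - 1) := by
  set z₀ : ℂ := ((0:ℝ):ℂ) + (t:ℂ)*Complex.I with hz₀
  have hz₀' : z₀ = t * Complex.I := by rw [hz₀]; push_cast; ring
  have hslit : z₀ ∈ Complex.slitPlane := by
    rw [Complex.mem_slitPlane_iff]
    right
    simp [hz₀', ht.ne']
  set d : ℂ := (β:ℂ) * z₀ ^ ((β:ℂ) - 1) with hd
  have hcpow : HasDerivAt (fun z : ℂ => z ^ (β:ℂ)) d z₀ :=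
    (Complex.hasStrictDerivAt_cpow_const hslit).hasDerivAt
  have hF : HasFDerivAt (fun z : ℂ => z ^ (β:ℂ))
      ((1 : ℂ →L[ℂ] ℂ).smulRight d) z₀ := hcpow.hasFDerivAt
  have hFR := hF.restrictScalars ℝ
  set L : (ℝ × ℝ) →L[ℝ] ℂ :=
    (Complex.equivRealProdCLM.symm : (ℝ × ℝ) ≃L[ℝ] ℂ).toContinuousLinearMap with hL
  have hLapp : ∀ q : ℝ × ℝ, L q = (q.1:ℂ) + (q.2:ℂ)*Complex.I := fun q =>
    Complex.equivRealProdCLM_symm_apply q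
  have hLz : L ((0:ℝ), t) = z₀ := by rw [hLapp]
  have hcomp : HasFDerivAt (fun p : ℝ × ℝ => BrownAux.gfun β p)
      ((Complex.imCLM.comp (((1 : ℂ →L[ℂ] ℂ).smulRight d).restrictScalars ℝ)).comp L)
      ((0:ℝ), t) := by
    rw [← hLz] at hFR
    have h2 := hFR.comp ((0:ℝ), t) L.hasFDerivAt
    have h3 := Complex.imCLM.hasFDerivAt.comp ((0:ℝ), t) h2
    refine h3.congr_of_eventuallyEq (Filter.Eventually.of_forall fun q => ?_)
    show BrownAux.gfun β q = Complex.imCLM ((L q) ^ (β:ℂ))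
    rw [hLapp q]
    rfl
  have hbgrad : fderiv ℝ b ((0:ℝ), t) = fderiv ℝ (BrownAux.gfun β) ((0:ℝ), t) := by
    apply Filter.EventuallyEq.fderiv_eq
    have hopen : IsOpen {q : ℝ × ℝ | 0 < q.2} := isOpen_lt continuous_const continuous_snd
    filter_upwards [hopen.mem_nhds (by exact ht : (0:ℝ) < ((0:ℝ), t).2)] with q hq
    exact hbg q hq
  have hgrad : fderiv ℝ (BrownAux.gfun β) ((0:ℝ), t) =
      (Complex.imCLM.comp (((1 : ℂ →L[ℂ] ℂ).smulRight d).restrictScalars ℝ)).comp L :=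
    hcomp.fderiv
  have e1 : fderiv ℝ b ((0:ℝ), t) ((1:ℝ), (0:ℝ)) = d.im := by
    rw [hbgrad, hgrad]
    simp [hLapp]
  have e2 : fderiv ℝ b ((0:ℝ), t) ((0:ℝ), (1:ℝ)) = d.re := by
    rw [hbgrad, hgrad]
    simp [hLapp, Complex.mul_im]
  rw [gradNorm, e1, e2]
  have habs : Real.sqrt (d.im ^ 2 + d.re ^ 2) = ‖d‖ := by
    rw [Complex.norm_def, Complex.normSq_apply]
    ring_nf
  rw [habs, hd, norm_mul]
  have hb1 : ‖(β:ℂ)‖ = β := by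
    rw [Complex.norm_real, Real.norm_eq_abs, abs_of_pos hβ]
  have hexp : ((β:ℂ) - 1) = (((β - 1 : ℝ)):ℂ) := by push_cast; ring
  rw [hb1, hexp, Complex.norm_cpow_real]
  have : ‖z₀‖ = t := by
    rw [hz₀']
    simp [abs_of_pos ht]
  rw [this]

lemma BrownAux.linteg_inv_top :
    ∫⁻ t in Set.Ioo (0:ℝ) 1, ENNReal.ofReal t⁻¹ = ⊤ := by
  by_contra h
  have hint : IntegrableOn (fun t : ℝ => t⁻¹) (Set.Ioo (0:ℝ) 1) := by
    refine ⟨measurable_inv.aestronglyMeasurable, ?_⟩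
    rw [hasFiniteIntegral_iff_norm]
    have heq : ∫⁻ t in Set.Ioo (0:ℝ) 1, ENNReal.ofReal ‖t⁻¹‖ =
        ∫⁻ t in Set.Ioo (0:ℝ) 1, ENNReal.ofReal t⁻¹ := by
      apply setLIntegral_congr_fun measurableSet_Ioo
      intro t ht
      show ENNReal.ofReal ‖t⁻¹‖ = ENNReal.ofReal t⁻¹
      rw [Real.norm_eq_abs, abs_of_pos (inv_pos.2 ht.1)]
    rw [heq]
    exact lt_top_iff_ne_top.2 h
  have hrpow : IntegrableOn (fun t : ℝ => t ^ (-1:ℝ)) (Set.Ioo (0:ℝ) 1) := by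
    apply hint.congr_fun _ measurableSet_Ioo
    intro t ht
    simp [Real.rpow_neg_one]
  have := (intervalIntegral.integrableOn_Ioo_rpow_iff one_pos).1 hrpow
  linarith

/-- the nontangential maximal function of `∇b` is not
square-integrable on the Dirichlet ray near the vertex:
`∫₀¹ ((∇b)*(t,0))² dt = +∞`. -/
theorem brown_b_ntMax_not_square_integrable
    (α : ℝ) (hα₁ : Real.pi ≤ α) (hα₂ : α < 2 * Real.pi)
    (β : ℝ) (hβ : β = Real.pi / (2 * α))
    (δ : ℝ) (hδ : 0 < δ) (hαδ : α + 2 * δ < 2 * Real.pi)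
    (b : ℝ × ℝ → ℝ)
    (hb : ∀ r θ : ℝ, 0 < r → -δ < θ → θ < α + δ →
      b (r * Real.cos θ, r * Real.sin θ) = r ^ β * Real.sin (β * θ)) :
    ∫⁻ t in Set.Ioo (0 : ℝ) 1, (ntMaxGrad α b ((t : ℝ), (0 : ℝ))) ^ 2 = ⊤ := by
  have hπ : 0 < Real.pi := Real.pi_pos
  have hα0 : 0 < α := lt_of_lt_of_le hπ hα₁
  have hβpos : 0 < β := by rw [hβ]; positivity
  have hβhalf : β ≤ 1 / 2 := by
    rw [hβ, div_le_div_iff₀ (by linarith) (by norm_num)]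
    linarith
  have hbg : ∀ p : ℝ × ℝ, 0 < p.2 → b p = BrownAux.gfun β p :=
    fun p hp => BrownAux.b_eq_gfun hα₁ hδ hb hp
  -- pointwise lower bound on Ioo 0 1
  have hle : ∀ t ∈ Set.Ioo (0:ℝ) 1,
      ENNReal.ofReal (β ^ 2 * t⁻¹) ≤ (ntMaxGrad α b ((t:ℝ), (0:ℝ))) ^ 2 := by
    intro t ht
    have ht0 : 0 < t := ht.1
    -- the point (0,t) is in the approach region of (t,0)
    have hX : ((0:ℝ), t) ∈ ntRegion α ((t:ℝ), (0:ℝ)) := by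
      refine ⟨BrownAux.upper_mem_sector hα₁ (by exact ht0), ?_⟩
      have hdist : dist (((0:ℝ), t)) (((t:ℝ), (0:ℝ))) = t := by
        rw [Prod.dist_eq]
        simp [Real.dist_eq, abs_of_pos ht0, abs_of_neg (neg_neg_iff_pos.2 ht0)]
      have hinf : t ≤ Metric.infDist (((0:ℝ), t)) (frontier (openSector α)) :=
        BrownAux.infDist_ge hα₁ (show (0:ℝ) ≤ (((0:ℝ), t) : ℝ × ℝ).2 from ht0.le)
      rw [hdist]
      calc t < 2 * t := by linarith
      _ ≤ 2 * Metric.infDist (((0:ℝ), t)) (frontier (openSector α)) := by linarith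
    have h1 : ENNReal.ofReal (gradNorm b ((0:ℝ), t)) ≤ ntMaxGrad α b ((t:ℝ), (0:ℝ)) :=
      le_biSup (fun X => ENNReal.ofReal (gradNorm b X)) hX
    have hgn : gradNorm b ((0:ℝ), t) = β * t ^ (β - 1) :=
      BrownAux.gradNorm_gfun hβpos ht0 hbg
    have h2 : β ^ 2 * t⁻¹ ≤ (gradNorm b ((0:ℝ), t)) ^ 2 := by
      rw [hgn, mul_pow, ← Real.rpow_natCast (t ^ (β - 1)) 2, ← Real.rpow_mul ht0.le]
      have hexp : t ^ (-1:ℝ) ≤ t ^ ((β - 1) * 2) :=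
        Real.rpow_le_rpow_of_exponent_ge ht0 ht.2.le (by linarith)
      rw [Real.rpow_neg_one] at hexp
      have := mul_le_mul_of_nonneg_left hexp (sq_nonneg β)
      simpa using this
    calc ENNReal.ofReal (β ^ 2 * t⁻¹)
        ≤ ENNReal.ofReal ((gradNorm b ((0:ℝ), t)) ^ 2) := ENNReal.ofReal_le_ofReal h2
      _ = (ENNReal.ofReal (gradNorm b ((0:ℝ), t))) ^ 2 :=
          ENNReal.ofReal_pow (Real.sqrt_nonneg _) 2
      _ ≤ (ntMaxGrad α b ((t:ℝ), (0:ℝ))) ^ 2 := pow_le_pow_left' h1 2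
  -- the lower-bound integral diverges
  have hleft : ∫⁻ t in Set.Ioo (0:ℝ) 1, ENNReal.ofReal (β ^ 2 * t⁻¹) = ⊤ := by
    have : ∀ t : ℝ, ENNReal.ofReal (β ^ 2 * t⁻¹) =
        ENNReal.ofReal (β ^ 2) * ENNReal.ofReal t⁻¹ := fun t =>
      ENNReal.ofReal_mul (sq_nonneg β)
    simp_rw [this]
    rw [lintegral_const_mul' _ _ ENNReal.ofReal_ne_top, BrownAux.linteg_inv_top,
      ENNReal.mul_top]
    rw [ne_eq, ENNReal.ofReal_eq_zero, not_le]
    positivity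
  refine eq_top_iff.2 ?_
  calc (⊤ : ENNReal) = ∫⁻ t in Set.Ioo (0:ℝ) 1, ENNReal.ofReal (β ^ 2 * t⁻¹) :=
      hleft.symm
    _ ≤ ∫⁻ t in Set.Ioo (0:ℝ) 1, (ntMaxGrad α b ((t:ℝ), (0:ℝ))) ^ 2 :=
      setLIntegral_mono' measurableSet_Ioo hle
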